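/- Let V and W be Lebesgue lattices over X and Y with Daniell integrals J and K, and let M be the set of functions f on X × Y such that f(x,·) ∈ W for all x ∈ X, the function x ↦ K(f(x,·)) belongs to V, and |f| ≤ g ⊗ h for some nonnegative g ∈ V, h ∈ W. Then P(M) ⊆ M: M is closed under pointwise limits of sequences dominated in absolute value by their first member, and moreover for such a convergent sequence fₙ → f in M, J(Kfₙ) → J(Kf). -/
import Mathlib


open Filter Topology

/-- `Pdom M`: dominated pointwise limits of sequences in `M`
(sequence `f₀, f₁, …` with `|fₙ| ≤ f₀` for `n ≥ 1`, converging pointwise). -/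
def Pdom {Z : Type*} (M : Set (Z → ℝ)) : Set (Z → ℝ) :=
  { f | ∃ F : ℕ → Z → ℝ, (∀ n, F n ∈ M) ∧ (∀ n, |F (n + 1)| ≤ F 0) ∧
      ∀ z, Tendsto (fun n => F n z) atTop (𝓝 (f z)) }

/-- `U` is a vector subspace of the functions `Z → ℝ`. -/
def IsSubspace {Z : Type*} (U : Set (Z → ℝ)) : Prop :=
  (0 : Z → ℝ) ∈ U ∧ (∀ f g, f ∈ U → g ∈ U → f + g ∈ U) ∧
    ∀ (c : ℝ) (f), f ∈ U → c • f ∈ U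

/-- A Riesz space of functions: a subspace closed under pointwise absolute value. -/
def IsRiesz {Z : Type*} (R : Set (Z → ℝ)) : Prop :=
  IsSubspace R ∧ ∀ f, f ∈ R → |f| ∈ R

/-- A Lebesgue lattice: a Riesz space closed under dominated pointwise limits. -/
def IsLebesgue {Z : Type*} (L : Set (Z → ℝ)) : Prop :=
  IsRiesz L ∧ Pdom L ⊆ L

/-- smallest Riesz space containing `M`. -/
def RGen {Z : Type*} (M : Set (Z → ℝ)) : Set (Z → ℝ) :=
  ⋂₀ { R | IsRiesz R ∧ M ⊆ R }

/-- smallest Lebesgue lattice containing `M`. -/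
def LGen {Z : Type*} (M : Set (Z → ℝ)) : Set (Z → ℝ) :=
  ⋂₀ { L | IsLebesgue L ∧ M ⊆ L }

/-- Daniell integral on `R`: additive, homogeneous, monotone, continuous under
decreasing convergence to `0`. -/
def IsDaniell {Z : Type*} (R : Set (Z → ℝ)) (I : (Z → ℝ) → ℝ) : Prop :=
  IsRiesz R ∧
  (∀ f g, f ∈ R → g ∈ R → I (f + g) = I f + I g) ∧
  (∀ (c : ℝ) (f), f ∈ R → I (c • f) = c * I f) ∧
  (∀ f, f ∈ R → I f ≤ I |f|) ∧
  ∀ F : ℕ → Z → ℝ, (∀ n, F n ∈ R) → (∀ n, 0 ≤ F (n + 1)) →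
    (∀ n, F (n + 1) ≤ F n) →
    (∀ z, Tendsto (fun n => F n z) atTop (𝓝 0)) →
    Tendsto (fun n => I (F n)) atTop (𝓝 0)

/-- elementary tensor `(g ⊗ h)(x, y) = g x * h y`. -/
def tensor {X Y : Type*} (g : X → ℝ) (h : Y → ℝ) : X × Y → ℝ :=
  fun p => g p.1 * h p.2

/-- tensor product `V ⊗ W`: finite sums of elementary tensors. -/
def TensorSet {X Y : Type*} (V : Set (X → ℝ)) (W : Set (Y → ℝ)) :
    Set (X × Y → ℝ) :=
  { f | ∃ (k : ℕ) (g : Fin k → X → ℝ) (h : Fin k → Y → ℝ),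
      (∀ i, g i ∈ V) ∧ (∀ i, h i ∈ W) ∧ f = ∑ i, tensor (g i) (h i) }

/-- `iterP U m`: `U₁ = U`, `U_{m+1} = P(U_m)` (0-indexed). -/
def iterP {Z : Type*} (U : Set (Z → ℝ)) : ℕ → Set (Z → ℝ)
  | 0 => U
  | n + 1 => Pdom (iterP U n)

/-- the set `M` of Lemma 7: functions with sections in `W`, partial integral
in `V`, dominated by a nonnegative elementary tensor. -/
def Mset {X Y : Type*} (V : Set (X → ℝ)) (W : Set (Y → ℝ))
    (K : (Y → ℝ) → ℝ) : Set (X × Y → ℝ) :=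
  { f | (∀ x, (fun y => f (x, y)) ∈ W) ∧
        (fun x => K (fun y => f (x, y))) ∈ V ∧
        ∃ g ∈ V, ∃ h ∈ W, 0 ≤ g ∧ 0 ≤ h ∧ |f| ≤ tensor g h }

section Aux

variable {Z : Type*} {R : Set (Z → ℝ)} {I : (Z → ℝ) → ℝ}

lemma riesz_neg (hR : IsRiesz R) {f} (hf : f ∈ R) : -f ∈ R := by
  have := hR.1.2.2 (-1) f hf
  simpa using this

lemma riesz_sub (hR : IsRiesz R) {f g} (hf : f ∈ R) (hg : g ∈ R) : f - g ∈ R := by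
  have := hR.1.2.1 f (-g) hf (riesz_neg hR hg)
  simpa [sub_eq_add_neg] using this

lemma riesz_max (hR : IsRiesz R) {f g} (hf : f ∈ R) (hg : g ∈ R) :
    (fun z => max (f z) (g z)) ∈ R := by
  have h3 : (f + g) + |f - g| ∈ R :=
    hR.1.2.1 _ _ (hR.1.2.1 f g hf hg) (hR.2 _ (riesz_sub hR hf hg))
  have h4 := hR.1.2.2 (1/2 : ℝ) _ h3
  convert h4 using 1
  funext z
  simp only [Pi.smul_apply, Pi.add_apply, Pi.abs_apply, Pi.sub_apply, smul_eq_mul]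
  rcases le_total (f z) (g z) with h | h
  · rw [max_eq_right h, abs_of_nonpos (by linarith)]; ring
  · rw [max_eq_left h, abs_of_nonneg (by linarith)]; ring

lemma daniell_neg (hI : IsDaniell R I) {f} (hf : f ∈ R) : I (-f) = -I f := by
  have := hI.2.2.1 (-1) f hf
  simpa using this

lemma daniell_nonneg (hI : IsDaniell R I) {f} (hf : f ∈ R) (h0 : 0 ≤ f) : 0 ≤ I f := by
  have h1 := hI.2.2.2.1 (-f) (riesz_neg hI.1 hf)
  rw [abs_neg, abs_of_nonneg h0, daniell_neg hI hf] at h1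
  linarith

lemma daniell_mono (hI : IsDaniell R I) {f g} (hf : f ∈ R) (hg : g ∈ R) (h : f ≤ g) :
    I f ≤ I g := by
  have h1 : g - f ∈ R := riesz_sub hI.1 hg hf
  have h2 : 0 ≤ I (g - f) := daniell_nonneg hI h1 (by
    intro z; simp only [Pi.sub_apply, Pi.zero_apply, sub_nonneg]; exact h z)
  have h3 : I (f + (g - f)) = I f + I (g - f) := hI.2.1 _ _ hf h1
  rw [add_sub_cancel] at h3
  linarith

lemma daniell_abs (hI : IsDaniell R I) {f} (hf : f ∈ R) : |I f| ≤ I |f| := by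
  rw [abs_le]
  constructor
  · have h1 := hI.2.2.2.1 (-f) (riesz_neg hI.1 hf)
    rw [abs_neg, daniell_neg hI hf] at h1
    linarith
  · exact hI.2.2.2.1 f hf

/-- partial maxima of the tail `D n, D (n+1), …`. -/
noncomputable def pmax {Z : Type*} (D : ℕ → Z → ℝ) (n : ℕ) : ℕ → Z → ℝ
  | 0 => D n
  | k + 1 => fun z => max (pmax D n k z) (D (n + k + 1) z)

/-- Dominated convergence for a Daniell integral on a Lebesgue lattice. -/
lemma daniell_dc (hR : IsLebesgue R) (hI : IsDaniell R I)
    (F : ℕ → Z → ℝ) (f : Z → ℝ)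
    (hF : ∀ n, F n ∈ R) (hdom : ∀ n, |F (n + 1)| ≤ F 0)
    (hlim : ∀ z, Tendsto (fun n => F n z) atTop (𝓝 (f z))) :
    f ∈ R ∧ Tendsto (fun n => I (F n)) atTop (𝓝 (I f)) := by
  have hfR : f ∈ R := hR.2 ⟨F, hF, hdom, hlim⟩
  refine ⟨hfR, ?_⟩
  have hF0 : ∀ z, 0 ≤ F 0 z := fun z => le_trans (abs_nonneg _) (hdom 0 z)
  have hFabs : ∀ n z, |F n z| ≤ F 0 z := by
    intro n z
    cases n with
    | zero => rw [abs_of_nonneg (hF0 z)]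
    | succ k => exact hdom k z
  have hfabs : ∀ z, |f z| ≤ F 0 z := fun z =>
    le_of_tendsto ((hlim z).abs) (Eventually.of_forall fun n => hFabs n z)
  set D : ℕ → Z → ℝ := fun n z => |F n z - f z| with hDdef
  have hDR : ∀ n, D n ∈ R := by
    intro n
    have h : D n = |F n - f| := by
      funext z; rw [Pi.abs_apply, Pi.sub_apply]
    rw [h]
    exact hR.1.2 _ (riesz_sub hR.1 (hF n) hfR)
  have hDnn : ∀ n z, 0 ≤ D n z := fun n z => abs_nonneg _
  have hDle : ∀ n z, D n z ≤ 2 * F 0 z := by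
    intro n z
    have h1 : |F n z - f z| ≤ |F n z| + |f z| := by
      rw [sub_eq_add_neg]
      exact le_trans (abs_add_le _ _) (by rw [abs_neg])
    have := hFabs n z; have := hfabs z
    simp only [hDdef]; linarith
  -- the decreasing sequence of tail suprema
  set H : ℕ → Z → ℝ := fun n z => ⨆ m, D (n + m) z with hHdef
  have hbdd : ∀ n z, BddAbove (Set.range fun m => D (n + m) z) := by
    intro n z
    exact ⟨2 * F 0 z, by rintro _ ⟨m, rfl⟩; exact hDle _ z⟩
  have hDleH : ∀ n m z, D (n + m) z ≤ H n z := fun n m z => le_ciSup (hbdd n z) m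
  -- properties of partial maxima
  have pmaxR : ∀ n k, pmax D n k ∈ R := by
    intro n k
    induction k with
    | zero => exact hDR n
    | succ k ih => exact riesz_max hR.1 ih (hDR _)
  have pmax_mono : ∀ n z, Monotone fun k => pmax D n k z := by
    intro n z
    apply monotone_nat_of_le_succ
    intro k
    exact le_max_left _ _
  have pmax_nn : ∀ n k z, 0 ≤ pmax D n k z := fun n k z =>
    le_trans (hDnn n z) (pmax_mono n z (Nat.zero_le k))
  have pmax_le : ∀ n k z, pmax D n k z ≤ 2 * F 0 z := by
    intro n k z
    induction k with
    | zero => exact hDle n z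
    | succ k ih => exact max_le ih (hDle _ z)
  have pmax_leH : ∀ n k z, pmax D n k z ≤ H n z := by
    intro n k z
    induction k with
    | zero => exact hDleH n 0 z
    | succ k ih => exact max_le ih (hDleH n (k + 1) z)
  have D_le_pmax : ∀ n m z, D (n + m) z ≤ pmax D n m z := by
    intro n m z
    induction m with
    | zero => exact le_refl _
    | succ m _ => exact le_max_right _ _
  have pmax_tendsto : ∀ n z, Tendsto (fun k => pmax D n k z) atTop (𝓝 (H n z)) := by
    intro n z
    have hb : BddAbove (Set.range fun k => pmax D n k z) :=
      ⟨2 * F 0 z, by rintro _ ⟨k, rfl⟩; exact pmax_le n k z⟩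
    have h1 := tendsto_atTop_ciSup (pmax_mono n z) hb
    have h2 : (⨆ k, pmax D n k z) = H n z := by
      apply le_antisymm
      · exact ciSup_le fun k => pmax_leH n k z
      · exact ciSup_le fun m => le_trans (D_le_pmax n m z) (le_ciSup hb m)
    rwa [h2] at h1
  -- H n ∈ R
  have hHR : ∀ n, H n ∈ R := by
    intro n
    apply hR.2
    refine ⟨fun k => Nat.casesOn k ((2 : ℝ) • F 0) (pmax D n), ?_, ?_, ?_⟩
    · intro k
      cases k with
      | zero => exact hR.1.1.2.2 2 _ (hF 0)
      | succ k => exact pmaxR n k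
    · intro k z
      simp only [Pi.abs_apply, Pi.smul_apply, smul_eq_mul]
      rw [abs_of_nonneg (pmax_nn n k z)]
      exact pmax_le n k z
    · intro z
      exact (tendsto_add_atTop_iff_nat 1).mp (pmax_tendsto n z)
  have hHnn : ∀ n z, 0 ≤ H n z := fun n z => le_trans (hDnn n z) (hDleH n 0 z)
  have hHanti : ∀ n z, H (n + 1) z ≤ H n z := by
    intro n z
    apply ciSup_le
    intro m
    have e : n + 1 + m = n + (m + 1) := by omega
    rw [e]
    exact le_ciSup (hbdd n z) (m + 1)
  have hH0 : ∀ z, Tendsto (fun n => H n z) atTop (𝓝 0) := by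
    intro z
    rw [Metric.tendsto_atTop]
    intro ε hε
    obtain ⟨N, hN⟩ := Metric.tendsto_atTop.mp (hlim z) (ε / 2) (by linarith)
    refine ⟨N, fun n hn => ?_⟩
    have hle : H n z ≤ ε / 2 := by
      apply ciSup_le
      intro m
      have := hN (n + m) (le_trans hn (Nat.le_add_right n m))
      rw [Real.dist_eq] at this
      exact this.le
    rw [Real.dist_eq, sub_zero, abs_of_nonneg (hHnn n z)]
    linarith
  have hIH : Tendsto (fun n => I (H n)) atTop (𝓝 0) :=
    hI.2.2.2.2 H hHR (fun n z => hHnn (n + 1) z) (fun n z => hHanti n z) hH0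
  have key : ∀ n, |I (F n) - I f| ≤ I (H n) := by
    intro n
    have hsub : F n - f ∈ R := riesz_sub hI.1 (hF n) hfR
    have h1 : I (F n) - I f = I (F n - f) := by
      have := hI.2.1 (F n - f) f hsub hfR
      rw [sub_add_cancel] at this
      linarith
    have h3 : |F n - f| = D n := by
      funext z; rw [Pi.abs_apply, Pi.sub_apply]
    have h4 : I (D n) ≤ I (H n) :=
      daniell_mono hI (hDR n) (hHR n) fun z => hDleH n 0 z
    calc |I (F n) - I f| = |I (F n - f)| := by rw [h1]
      _ ≤ I |F n - f| := daniell_abs hI hsub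
      _ = I (D n) := by rw [h3]
      _ ≤ I (H n) := h4
  have hsq : Tendsto (fun n => I (F n) - I f) atTop (𝓝 0) := by
    apply squeeze_zero_norm _ hIH
    intro n
    rw [Real.norm_eq_abs]
    exact key n
  exact tendsto_sub_nhds_zero_iff.mp hsq

end Aux

lemma key_lemma {X Y : Type*} (V : Set (X → ℝ)) (W : Set (Y → ℝ))
    (J : (X → ℝ) → ℝ) (K : (Y → ℝ) → ℝ)
    (hV : IsLebesgue V) (hW : IsLebesgue W)
    (hJ : IsDaniell V J) (hK : IsDaniell W K)
    (F : ℕ → X × Y → ℝ) (f : X × Y → ℝ)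
    (hFM : ∀ n, F n ∈ Mset V W K) (hdom : ∀ n, |F (n + 1)| ≤ F 0)
    (hlim : ∀ p, Tendsto (fun n => F n p) atTop (𝓝 (f p))) :
    f ∈ Mset V W K ∧
      Tendsto (fun n => J (fun x => K (fun y => F n (x, y)))) atTop
        (𝓝 (J (fun x => K (fun y => f (x, y))))) := by
  have hsec : ∀ x, (fun y => f (x, y)) ∈ W ∧
      Tendsto (fun n => K (fun y => F n (x, y))) atTop (𝓝 (K (fun y => f (x, y)))) := by
    intro x
    apply daniell_dc hW hK (fun n y => F n (x, y)) (fun y => f (x, y))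
      (fun n => (hFM n).1 x) ?_ (fun y => hlim (x, y))
    intro n y
    have := hdom n (x, y)
    simpa using this
  have hGV : ∀ n, (fun x => K (fun y => F n (x, y))) ∈ V := fun n => (hFM n).2.1
  have hGdom : ∀ n, |fun x => K (fun y => F (n + 1) (x, y))| ≤ fun x => K (fun y => F 0 (x, y)) := by
    intro n x
    have hsW : (fun y => F (n + 1) (x, y)) ∈ W := (hFM (n + 1)).1 x
    have h1 : |K (fun y => F (n + 1) (x, y))| ≤ K |fun y => F (n + 1) (x, y)| :=
      daniell_abs hK hsW
    have h2 : K |fun y => F (n + 1) (x, y)| ≤ K (fun y => F 0 (x, y)) := by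
      apply daniell_mono hK (hK.1.2 _ hsW) ((hFM 0).1 x)
      intro y
      have := hdom n (x, y)
      simpa using this
    simpa using h1.trans h2
  have hmain := daniell_dc hV hJ (fun n x => K (fun y => F n (x, y)))
    (fun x => K (fun y => f (x, y))) hGV hGdom (fun x => (hsec x).2)
  refine ⟨⟨fun x => (hsec x).1, hmain.1, ?_⟩, hmain.2⟩
  obtain ⟨g, hgV, h, hhW, hg0, hh0, hle⟩ := (hFM 0).2.2
  refine ⟨g, hgV, h, hhW, hg0, hh0, ?_⟩
  intro p
  have hF0 : 0 ≤ F 0 p := le_trans (abs_nonneg _) (hdom 0 p)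
  have hFabs : ∀ n, |F n p| ≤ F 0 p := by
    intro n
    cases n with
    | zero => rw [abs_of_nonneg hF0]
    | succ k => exact hdom k p
  have h1 : |f p| ≤ F 0 p :=
    le_of_tendsto ((hlim p).abs) (Eventually.of_forall hFabs)
  have h2 : F 0 p ≤ tensor g h p := by
    have := hle p
    rwa [Pi.abs_apply, abs_of_nonneg hF0] at this
  calc |f| p = |f p| := rfl
    _ ≤ F 0 p := h1
    _ ≤ tensor g h p := h2

theorem stmt17 {X Y : Type*} (V : Set (X → ℝ)) (W : Set (Y → ℝ))
    (J : (X → ℝ) → ℝ) (K : (Y → ℝ) → ℝ)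
    (hV : IsLebesgue V) (hW : IsLebesgue W)
    (hJ : IsDaniell V J) (hK : IsDaniell W K) :
    Pdom (Mset V W K) ⊆ Mset V W K ∧
    ∀ (F : ℕ → X × Y → ℝ) (f : X × Y → ℝ),
      (∀ n, F n ∈ Mset V W K) → (∀ n, |F (n + 1)| ≤ F 0) →
      (∀ p, Tendsto (fun n => F n p) atTop (𝓝 (f p))) →
      Tendsto (fun n => J (fun x => K (fun y => F n (x, y)))) atTop
        (𝓝 (J (fun x => K (fun y => f (x, y))))) := by
  constructor
  · rintro f ⟨F, hFM, hdom, hlim⟩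
    exact (key_lemma V W J K hV hW hJ hK F f hFM hdom hlim).1
  · intro F f h1 h2 h3
    exact (key_lemma V W J K hV hW hJ hK F f h1 h2 h3).2
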